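/- Let U be a closed subset of spec R that is π-stable. Then there exists an X-semiprime ideal J of R such that U = V(J). -/

import Mathlib

/-- An ideal (i.e. left ideal) of a not-necessarily-commutative ring is two-sided. -/
def IsTwoSidedI {R : Type*} [Ring R] (I : Ideal R) : Prop :=
  ∀ a ∈ I, ∀ r : R, a * r ∈ I

/-- A (two-sided) ideal `P` is prime: it is proper and `IJ ⊆ P` forces `I ⊆ P` or `J ⊆ P`
for all two-sided ideals `I`, `J`. -/
def IsPrimeTS {R : Type*} [Ring R] (P : Ideal R) : Prop :=
  IsTwoSidedI P ∧ P ≠ ⊤ ∧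
    ∀ I J : Ideal R, IsTwoSidedI I → IsTwoSidedI J →
      (∀ a ∈ I, ∀ b ∈ J, a * b ∈ P) → I ≤ P ∨ J ≤ P

/-- `J` is `X`-semiprime: an intersection of a collection of `X`-prime ideals. -/
def IsXSemiprime {R : Type*} [Ring R] (𝒳 : Set (Ideal R)) (J : Ideal R) : Prop :=
  ∃ T ⊆ 𝒳, J = sInf T

section Aux
variable {R : Type*} [Ring R]

/-- The two-sided product of two left ideals. -/
def tsMul (A B : Ideal R) : Ideal R where
  carrier := (AddSubmonoid.closure {x : R | ∃ a ∈ A, ∃ b ∈ B, x = a * b} : AddSubmonoid R)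
  add_mem' := fun h1 h2 => AddSubmonoid.add_mem _ h1 h2
  zero_mem' := AddSubmonoid.zero_mem _
  smul_mem' := by
    intro r x hx
    simp only [smul_eq_mul, SetLike.mem_coe] at *
    induction hx using AddSubmonoid.closure_induction with
    | mem y hy =>
      obtain ⟨a, haA, b, hbB, rfl⟩ := hy
      exact AddSubmonoid.subset_closure ⟨r * a, A.smul_mem r haA, b, hbB, (mul_assoc r a b).symm⟩
    | zero => simpa using AddSubmonoid.zero_mem _
    | add y z _ _ hy hz => simpa [mul_add] using AddSubmonoid.add_mem _ hy hz

lemma mul_mem_tsMul {A B : Ideal R} {a b : R} (ha : a ∈ A) (hb : b ∈ B) :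
    a * b ∈ tsMul A B :=
  AddSubmonoid.subset_closure ⟨a, ha, b, hb, rfl⟩

lemma tsMul_le {A B : Ideal R} {C : Ideal R} :
    tsMul A B ≤ C ↔ ∀ a ∈ A, ∀ b ∈ B, a * b ∈ C := by
  constructor
  · exact fun h a ha b hb => h (mul_mem_tsMul ha hb)
  · intro h x hx
    induction hx using AddSubmonoid.closure_induction with
    | mem y hy => obtain ⟨a, haA, b, hbB, rfl⟩ := hy; exact h a haA b hbB
    | zero => exact C.zero_mem
    | add y z _ _ hy hz => exact C.add_mem hy hz

lemma tsMul_mono {A A' B B' : Ideal R} (hA : A ≤ A') (hB : B ≤ B') :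
    tsMul A B ≤ tsMul A' B' :=
  tsMul_le.mpr fun a ha b hb => mul_mem_tsMul (hA ha) (hB hb)

lemma tsMul_le_right {A B : Ideal R} : tsMul A B ≤ B :=
  tsMul_le.mpr fun a _ b hb => B.smul_mem a hb

lemma tsMul_le_left {A B : Ideal R} (hA : IsTwoSidedI A) : tsMul A B ≤ A :=
  tsMul_le.mpr fun a ha b _ => hA a ha b

lemma tsMul_twoSided {A B : Ideal R} (hB : IsTwoSidedI B) : IsTwoSidedI (tsMul A B) := by
  intro x hx r
  induction hx using AddSubmonoid.closure_induction with
  | mem y hy =>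
    obtain ⟨a, haA, b, hbB, rfl⟩ := hy
    exact mul_assoc a b r ▸ mul_mem_tsMul haA (hB b hbB r)
  | zero => simpa using (tsMul A B).zero_mem
  | add y z _ _ hy hz => simpa [add_mul] using (tsMul A B).add_mem hy hz

lemma tsMul_assoc_le {A B C : Ideal R} :
    tsMul A (tsMul B C) ≤ tsMul (tsMul A B) C := by
  refine tsMul_le.mpr fun a ha m hm => ?_
  induction hm using AddSubmonoid.closure_induction with
  | mem y hy =>
    obtain ⟨b, hbB, c, hcC, rfl⟩ := hy
    exact (mul_assoc a b c).symm ▸ mul_mem_tsMul (mul_mem_tsMul ha hbB) hcC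
  | zero => simpa using (tsMul (tsMul A B) C).zero_mem
  | add y z _ _ hy hz => simpa [mul_add] using (tsMul (tsMul A B) C).add_mem hy hz

def listProd : List (Ideal R) → Ideal R
  | [] => ⊤
  | A :: L => tsMul A (listProd L)

lemma listProd_twoSided : ∀ {L : List (Ideal R)}, (∀ A ∈ L, IsTwoSidedI A) →
    IsTwoSidedI (listProd L)
  | [], _ => fun a _ r => trivial
  | A :: L, h => tsMul_twoSided (listProd_twoSided fun B hB => h B (List.mem_cons_of_mem _ hB))

lemma listProd_le_mem : ∀ {L : List (Ideal R)} {A : Ideal R}, A ∈ L → IsTwoSidedI A →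
    listProd L ≤ A := by
  intro L
  induction L with
  | nil => intro A hA; simp at hA
  | cons B L ih =>
    intro A hA hts
    rcases List.mem_cons.mp hA with rfl | hA
    · exact tsMul_le_left hts
    · exact le_trans tsMul_le_right (ih hA hts)

lemma listProd_mono : ∀ {L L' : List (Ideal R)}, List.Forall₂ (· ≤ ·) L L' →
    listProd L ≤ listProd L' := by
  intro L L' h
  induction h with
  | nil => exact le_rfl
  | cons h _ ih => exact tsMul_mono h ih

lemma listProd_append_le {L₁ L₂ : List (Ideal R)} :
    listProd (L₁ ++ L₂) ≤ tsMul (listProd L₁) (listProd L₂) := by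
  induction L₁ with
  | nil =>
    intro x hx
    simpa [listProd] using mul_mem_tsMul (Submodule.mem_top (x := (1:R))) hx
  | cons A L₁ ih =>
    show tsMul A (listProd (L₁ ++ L₂)) ≤ _
    calc tsMul A (listProd (L₁ ++ L₂)) ≤ tsMul A (tsMul (listProd L₁) (listProd L₂)) :=
          tsMul_mono le_rfl ih
      _ ≤ tsMul (tsMul A (listProd L₁)) (listProd L₂) := tsMul_assoc_le

/-- Prime avoidance for list products. -/
lemma listProd_le_prime {P : Ideal R} (hP : IsPrimeTS P) :
    ∀ {L : List (Ideal R)}, (∀ A ∈ L, IsTwoSidedI A) → listProd L ≤ P →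
    ∃ A ∈ L, A ≤ P := by
  intro L
  induction L with
  | nil =>
    intro _ hle
    exact absurd (top_le_iff.mp hle) hP.2.1
  | cons A L ih =>
    intro hts hle
    rcases hP.2.2 A (listProd L) (hts A List.mem_cons_self)
        (listProd_twoSided fun B hB => hts B (List.mem_cons_of_mem _ hB))
        (fun a haA b hb => hle (mul_mem_tsMul haA hb)) with h | h
    · exact ⟨A, List.mem_cons_self, h⟩
    · obtain ⟨B, hB, hBP⟩ := ih (fun B hB => hts B (List.mem_cons_of_mem _ hB)) h
      exact ⟨B, List.mem_cons_of_mem _ hB, hBP⟩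

/-- Noetherian decomposition: every two-sided ideal contains a finite product of
primes containing it. -/
lemma exists_prime_list [IsNoetherianRing R] (I : Ideal R) (hI : IsTwoSidedI I) :
    ∃ L : List (Ideal R), (∀ P ∈ L, IsPrimeTS P ∧ I ≤ P) ∧ listProd L ≤ I := by
  induction I using IsNoetherian.induction with
  | _ I IH =>
  by_cases htop : I = ⊤
  · exact ⟨[], by simp, by simp [listProd, htop]⟩
  by_cases hprime : IsPrimeTS I
  · refine ⟨[I], by simp [hprime], ?_⟩
    show tsMul I ⊤ ≤ I
    exact tsMul_le.mpr fun a ha b _ => hI a ha b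
  · have : ∃ A B : Ideal R, IsTwoSidedI A ∧ IsTwoSidedI B ∧
        (∀ a ∈ A, ∀ b ∈ B, a * b ∈ I) ∧ ¬ A ≤ I ∧ ¬ B ≤ I := by
      by_contra hcon
      refine hprime ⟨hI, htop, fun A B hA hB hab => ?_⟩
      by_contra hor
      push_neg at hor
      exact hcon ⟨A, B, hA, hB, hab, hor.1, hor.2⟩
    obtain ⟨A, B, hA, hB, hab, hAI, hBI⟩ := this
    have hA' : IsTwoSidedI (A ⊔ I) := by
      intro x hx r
      obtain ⟨a, haA, i, hiI, rfl⟩ := Submodule.mem_sup.mp hx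
      exact add_mul a i r ▸ Submodule.mem_sup.mpr ⟨a * r, hA a haA r, i * r, hI i hiI r, rfl⟩
    have hB' : IsTwoSidedI (B ⊔ I) := by
      intro x hx r
      obtain ⟨b, hbB, i, hiI, rfl⟩ := Submodule.mem_sup.mp hx
      exact add_mul b i r ▸ Submodule.mem_sup.mpr ⟨b * r, hB b hbB r, i * r, hI i hiI r, rfl⟩
    have hab' : ∀ a ∈ A ⊔ I, ∀ b ∈ B ⊔ I, a * b ∈ I := by
      intro x hx y hy
      obtain ⟨a, haA, i, hiI, rfl⟩ := Submodule.mem_sup.mp hx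
      obtain ⟨b, hbB, j, hjI, rfl⟩ := Submodule.mem_sup.mp hy
      have h1 : a * b ∈ I := hab a haA b hbB
      have h2 : a * j ∈ I := I.smul_mem a hjI
      have h3 : i * b ∈ I := hI i hiI b
      have h4 : i * j ∈ I := I.smul_mem i hjI
      have heq : (a + i) * (b + j) = a * b + a * j + (i * b + i * j) := by noncomm_ring
      rw [heq]
      exact I.add_mem (I.add_mem h1 h2) (I.add_mem h3 h4)
    have hAgt : I < A ⊔ I :=
      lt_of_le_of_ne le_sup_right (fun h => hAI (h ▸ le_sup_left))
    have hBgt : I < B ⊔ I :=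
      lt_of_le_of_ne le_sup_right (fun h => hBI (h ▸ le_sup_left))
    obtain ⟨L₁, hL₁, hL₁le⟩ := IH (A ⊔ I) hAgt hA'
    obtain ⟨L₂, hL₂, hL₂le⟩ := IH (B ⊔ I) hBgt hB'
    refine ⟨L₁ ++ L₂, ?_, ?_⟩
    · intro P hP
      rcases List.mem_append.mp hP with h | h
      · exact ⟨(hL₁ P h).1, le_sup_right.trans (hL₁ P h).2⟩
      · exact ⟨(hL₂ P h).1, le_sup_right.trans (hL₂ P h).2⟩
    · calc listProd (L₁ ++ L₂) ≤ tsMul (listProd L₁) (listProd L₂) := listProd_append_le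
        _ ≤ tsMul (A ⊔ I) (B ⊔ I) := tsMul_mono hL₁le hL₂le
        _ ≤ I := tsMul_le.mpr hab'

lemma sInf_chain_prime {c : Set (Ideal R)} (hne : c.Nonempty)
    (hchain : IsChain (· ≤ ·) c) (hc : ∀ P ∈ c, IsPrimeTS P) : IsPrimeTS (sInf c) := by
  obtain ⟨P₀, hP₀⟩ := hne
  refine ⟨?_, ?_, ?_⟩
  · intro a haMem r
    rw [Submodule.mem_sInf] at haMem ⊢
    exact fun P hP => (hc P hP).1 a (haMem P hP) r
  · intro htop
    exact (hc P₀ hP₀).2.1 (top_le_iff.mp (htop ▸ sInf_le hP₀))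
  · intro I J hI hJ hab
    by_contra hor
    push_neg at hor
    have h1 : ∃ P₁ ∈ c, ¬ I ≤ P₁ := by
      by_contra h; push_neg at h; exact hor.1 (le_sInf h)
    have h2 : ∃ P₂ ∈ c, ¬ J ≤ P₂ := by
      by_contra h; push_neg at h; exact hor.2 (le_sInf h)
    obtain ⟨P₁, hP₁c, hIP₁⟩ := h1
    obtain ⟨P₂, hP₂c, hJP₂⟩ := h2
    have key : ∀ Pm ∈ c, Pm ≤ P₁ → Pm ≤ P₂ → False := by
      intro Pm hPm h1' h2'
      rcases (hc Pm hPm).2.2 I J hI hJ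
          (fun a ha b hb => Submodule.mem_sInf.mp (hab a ha b hb) Pm hPm) with h | h
      · exact hIP₁ (h.trans h1')
      · exact hJP₂ (h.trans h2')
    rcases eq_or_ne P₁ P₂ with rfl | hne'
    · exact key P₁ hP₁c le_rfl le_rfl
    rcases hchain hP₁c hP₂c hne' with h | h
    · exact key P₁ hP₁c le_rfl h
    · exact key P₂ hP₂c h le_rfl

lemma exists_minimal_prime (Q P : Ideal R) (hP : IsPrimeTS P) (hQP : Q ≤ P) :
    ∃ m : Ideal R, IsPrimeTS m ∧ Q ≤ m ∧ m ≤ P ∧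
      ∀ P', IsPrimeTS P' → Q ≤ P' → P' ≤ m → P' = m := by
  let s : Set (Ideal R)ᵒᵈ := {m | IsPrimeTS (OrderDual.ofDual m) ∧
    Q ≤ OrderDual.ofDual m ∧ OrderDual.ofDual m ≤ P}
  have hzorn := zorn_le_nonempty₀ s ?_ (OrderDual.toDual P) ⟨hP, hQP, le_rfl⟩
  · obtain ⟨m, hPm, hm⟩ := hzorn
    refine ⟨OrderDual.ofDual m, hm.1.1, hm.1.2.1, hm.1.2.2, ?_⟩
    intro P' hP' hQP' hP'm
    exact le_antisymm hP'm (hm.2 (y := OrderDual.toDual P') ⟨hP', hQP', hP'm.trans hm.1.2.2⟩ hP'm)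
  · intro c hcs hchain y hy
    set c' : Set (Ideal R) := OrderDual.ofDual '' c with hc'
    have hc'ne : c'.Nonempty := ⟨OrderDual.ofDual y, y, hy, rfl⟩
    have hc'chain : IsChain (· ≤ ·) c' := by
      rintro _ ⟨p, hp, rfl⟩ _ ⟨q', hq', rfl⟩ hne'
      rcases hchain hp hq' (fun h => hne' (congrArg _ h)) with h | h
      · exact Or.inr h
      · exact Or.inl h
    have hall : ∀ P' ∈ c', IsPrimeTS P' := by
      rintro _ ⟨p, hp, rfl⟩; exact (hcs hp).1
    refine ⟨OrderDual.toDual (sInf c'), ⟨sInf_chain_prime hc'ne hc'chain hall, ?_, ?_⟩, ?_⟩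
    · refine le_sInf ?_
      rintro _ ⟨z, hz, rfl⟩
      exact (hcs hz).2.1
    · exact le_trans (sInf_le (show OrderDual.ofDual y ∈ c' from ⟨y, hy, rfl⟩)) (hcs hy).2.2
    · intro z hz
      exact sInf_le (show OrderDual.ofDual z ∈ c' from ⟨z, hz, rfl⟩)

end Aux

/-- Lemma 1.6: a closed `π`-stable subset `U` of `spec R` has the form
`U = V(J)` for some `X`-semiprime ideal `J`. -/
theorem stmt_1 {R : Type*} [Ring R] [IsNoetherianRing R] [IsNoetherianRing Rᵐᵒᵖ]
    (𝒳 : Set (Ideal R)) (h𝒳ne : 𝒳.Nonempty)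
    (h𝒳ts : ∀ Q ∈ 𝒳, IsTwoSidedI Q)
    (q : Ideal R → Ideal R)
    (ha : ∀ P : Ideal R, IsPrimeTS P →
      q P ∈ 𝒳 ∧ q P ≤ P ∧ ∀ J, IsXSemiprime 𝒳 J → J ≤ P → J ≤ q P)
    (hb : ∀ Q ∈ 𝒳, ∀ P : Ideal R, IsPrimeTS P → Q ≤ P →
      (∀ P', IsPrimeTS P' → Q ≤ P' → P' ≤ P → P' = P) → q P = Q)
    (U : Set (Ideal R))
    (hUclosed : ∃ I : Ideal R, IsTwoSidedI I ∧ U = {P | IsPrimeTS P ∧ I ≤ P})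
    (hUstable : ∀ P : Ideal R, IsPrimeTS P → (∃ P' ∈ U, q P' = q P) → P ∈ U) :
    ∃ J : Ideal R, IsXSemiprime 𝒳 J ∧ U = {P | IsPrimeTS P ∧ J ≤ P} := by

  obtain ⟨I, hIts, hU⟩ := hUclosed
  obtain ⟨L, hL, hLle⟩ := exists_prime_list I hIts
  refine ⟨sInf (q '' {P | P ∈ L}), ⟨q '' {P | P ∈ L}, ?_, rfl⟩, ?_⟩
  · rintro _ ⟨P, hP, rfl⟩
    exact (ha P (hL P hP).1).1
  · have htsmap : ∀ A ∈ L.map q, IsTwoSidedI A := by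
      intro A hA
      obtain ⟨P', hP', rfl⟩ := List.mem_map.mp hA
      exact h𝒳ts _ (ha P' (hL P' hP').1).1
    ext P
    simp only [hU, Set.mem_setOf_eq]
    constructor
    · rintro ⟨hPpr, hIP⟩
      refine ⟨hPpr, ?_⟩
      have hmap : List.Forall₂ (· ≤ ·) (L.map q) L := by
        rw [List.forall₂_map_left_iff, List.forall₂_same]
        exact fun P' hP' => (ha P' (hL P' hP').1).2.1
      have h1 : listProd (L.map q) ≤ P := (listProd_mono hmap).trans (hLle.trans hIP)
      obtain ⟨A, hAmem, hAP⟩ := listProd_le_prime hPpr htsmap h1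
      obtain ⟨P', hP', rfl⟩ := List.mem_map.mp hAmem
      exact (sInf_le (Set.mem_image_of_mem q hP')).trans hAP
    · rintro ⟨hPpr, hJP⟩
      have h1 : listProd (L.map q) ≤ sInf (q '' {P | P ∈ L}) := by
        refine le_sInf ?_
        rintro _ ⟨P', hP', rfl⟩
        exact listProd_le_mem (List.mem_map_of_mem (f := q) hP') (htsmap _ (List.mem_map_of_mem (f := q) hP'))
      obtain ⟨A, hAmem, hAP⟩ := listProd_le_prime hPpr htsmap (h1.trans hJP)
      obtain ⟨P', hP', rfl⟩ := List.mem_map.mp hAmem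
      have hP'pr := (hL P' hP').1
      have hQX : q P' ∈ 𝒳 := (ha P' hP'pr).1
      obtain ⟨m, hmpr, hQm, hmP, hmmin⟩ := exists_minimal_prime (q P') P hPpr hAP
      have hqm : q m = q P' := hb (q P') hQX m hmpr hQm hmmin
      have hmU : m ∈ U :=
        hUstable m hmpr ⟨P', by rw [hU]; exact ⟨hP'pr, (hL P' hP').2⟩, hqm.symm⟩
      rw [hU] at hmU
      exact ⟨hPpr, hmU.2.trans hmP⟩
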